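/- Let 𝕂 be an integral domain of characteristic zero, let ⟨a⟩ be a cyclic group of order n ≥ 2, and let k be an integer with 1 ≤ k < n. In the group ring 𝕂⟨a⟩ set Δ_k(a) = Σ_{i=0}^{k-1} a^i, Δ_{-k}(a) = Σ_{i=0}^{n-k-1} a^i and â = Σ_{i=0}^{n-1} a^i. Then for all integers j, l, s ≥ 0 and every integer β, the element Δ_{-k}(a)^j · Δ_k(a)^l · (a-1)^s is nonzero and is not equal to β·â. -/

import Mathlib

theorem stmt_12 {𝕂 : Type*} [CommRing 𝕂] [IsDomain 𝕂] [CharZero 𝕂]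
    {G : Type*} [Group G] (a : G) (n : ℕ) (hn : 2 ≤ n) (ha : orderOf a = n)
    (hgen : Subgroup.zpowers a = ⊤)
    (k : ℕ) (hk1 : 1 ≤ k) (hkn : k < n) :
    ∀ (j l s : ℕ) (β : ℤ),
      (∑ i ∈ Finset.range (n - k), (MonoidAlgebra.of 𝕂 G a) ^ i) ^ j * (∑ i ∈ Finset.range (k), (MonoidAlgebra.of 𝕂 G a) ^ i) ^ l * (MonoidAlgebra.of 𝕂 G a - 1) ^ s ≠ 0 ∧
      (∑ i ∈ Finset.range (n - k), (MonoidAlgebra.of 𝕂 G a) ^ i) ^ j * (∑ i ∈ Finset.range (k), (MonoidAlgebra.of 𝕂 G a) ^ i) ^ l * (MonoidAlgebra.of 𝕂 G a - 1) ^ s ≠ β • (∑ i ∈ Finset.range (n), (MonoidAlgebra.of 𝕂 G a) ^ i) := by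
  intro j l s β
  have hn0 : n ≠ 0 := by omega
  set ζ : ℂ := Complex.exp (2 * Real.pi * Complex.I / n) with hζdef
  have hζ : IsPrimitiveRoot ζ n := Complex.isPrimitiveRoot_exp n hn0
  have hζ0 : ζ ≠ 0 := hζ.ne_zero hn0
  have hζn : ζ ^ n = 1 := hζ.pow_eq_one
  have hζ1 : ζ ≠ 1 := hζ.ne_one (by omega)
  -- well-definedness of the character
  have key : ∀ m m' : ℤ, a ^ m = a ^ m' → ζ ^ m = ζ ^ m' := by
    intro m m' h
    have h1 : a ^ (m - m') = 1 := by
      rw [zpow_sub, h, mul_inv_cancel]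
    have h2 : (n : ℤ) ∣ m - m' := by
      rw [← ha]; exact orderOf_dvd_iff_zpow_eq_one.mpr h1
    obtain ⟨t, ht⟩ := h2
    have h3 : ζ ^ (m - m') = 1 := by
      rw [ht, zpow_mul, zpow_natCast, hζn, one_zpow]
    calc ζ ^ m = ζ ^ (m' + (m - m')) := by ring_nf
      _ = ζ ^ m' * ζ ^ (m - m') := zpow_add₀ hζ0 _ _
      _ = ζ ^ m' := by rw [h3, mul_one]
  have hmem : ∀ g : G, ∃ m : ℤ, a ^ m = g := fun g =>
    Subgroup.mem_zpowers_iff.mp (by rw [hgen]; exact Subgroup.mem_top g)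
  choose E hE using hmem
  let f : G →* ℂ :=
    { toFun := fun g => ζ ^ E g
      map_one' := by
        have h : ζ ^ E 1 = ζ ^ (0 : ℤ) := key _ _ (by rw [hE]; simp)
        simpa using h
      map_mul' := fun g h => by
        have h' : ζ ^ E (g * h) = ζ ^ (E g + E h) :=
          key _ _ (by rw [zpow_add, hE, hE, hE])
        show ζ ^ E (g * h) = ζ ^ E g * ζ ^ E h
        rw [h', zpow_add₀ hζ0] }
  have hfa : f a = ζ := by
    have h : ζ ^ E a = ζ ^ (1 : ℤ) := key _ _ (by rw [hE]; simp)
    simpa [f] using h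
  let φ : MonoidAlgebra ℤ G →ₐ[ℤ] ℂ := MonoidAlgebra.lift ℤ ℂ G f
  have hφa : φ (MonoidAlgebra.of ℤ G a) = ζ := by
    simp [φ, hfa]
  -- geometric sums of ζ
  have gnz : ∀ m : ℕ, 0 < m → m < n → (∑ i ∈ Finset.range m, ζ ^ i) ≠ 0 := by
    intro m hm1 hm2 h0
    have hg := geom_sum_mul ζ m
    rw [h0, zero_mul] at hg
    have : ζ ^ m = 1 := by linear_combination -hg
    exact hζ.pow_ne_one_of_pos_of_lt (by omega) hm2 this
  have gz : (∑ i ∈ Finset.range n, ζ ^ i) = 0 := by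
    have hg := geom_sum_mul ζ n
    rw [hζn, sub_self] at hg
    rcases mul_eq_zero.mp hg with h | h
    · exact h
    · exact absurd (by linear_combination h) hζ1
  -- the elements over ℤ
  set xZ : MonoidAlgebra ℤ G :=
    (∑ i ∈ Finset.range (n - k), (MonoidAlgebra.of ℤ G a) ^ i) ^ j *
      (∑ i ∈ Finset.range k, (MonoidAlgebra.of ℤ G a) ^ i) ^ l *
      (MonoidAlgebra.of ℤ G a - 1) ^ s with hxZ
  set hatZ : MonoidAlgebra ℤ G := ∑ i ∈ Finset.range n, (MonoidAlgebra.of ℤ G a) ^ i with hhatZ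
  have hφx : φ xZ =
      (∑ i ∈ Finset.range (n - k), ζ ^ i) ^ j * (∑ i ∈ Finset.range k, ζ ^ i) ^ l *
        (ζ - 1) ^ s := by
    simp only [hxZ, map_mul, map_pow, map_sum, map_sub, map_one, hφa]
  have hφxne : φ xZ ≠ 0 := by
    rw [hφx]
    refine mul_ne_zero (mul_ne_zero (pow_ne_zero _ ?_) (pow_ne_zero _ ?_)) (pow_ne_zero _ ?_)
    · exact gnz (n - k) (by omega) (by omega)
    · exact gnz k (by omega) (by omega)
    · exact sub_ne_zero.mpr hζ1
  have hφhat : φ hatZ = 0 := by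
    rw [hhatZ, map_sum]
    simp only [map_pow, hφa]
    exact gz
  -- the coefficient map ℤ → 𝕂
  have hcomm : ∀ (x : ℤ) (y : G),
      Commute ((MonoidAlgebra.singleOneRingHom.comp (Int.castRingHom 𝕂)) x)
        (MonoidAlgebra.of 𝕂 G y) := by
    intro x y
    show MonoidAlgebra.single (1 : G) ((x : 𝕂)) * MonoidAlgebra.single y (1 : 𝕂) =
      MonoidAlgebra.single y (1 : 𝕂) * MonoidAlgebra.single (1 : G) ((x : 𝕂))
    rw [MonoidAlgebra.single_mul_single, MonoidAlgebra.single_mul_single]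
    rw [one_mul, mul_one, one_mul, mul_one]
  let ψ : MonoidAlgebra ℤ G →+* MonoidAlgebra 𝕂 G :=
    MonoidAlgebra.liftNCRingHom (MonoidAlgebra.singleOneRingHom.comp (Int.castRingHom 𝕂))
      (MonoidAlgebra.of 𝕂 G) hcomm
  have hψsingle : ∀ (g : G) (c : ℤ),
      ψ (MonoidAlgebra.single g c) = MonoidAlgebra.single g (c : 𝕂) := by
    intro g c
    show MonoidAlgebra.liftNC _ _ _ = _
    rw [MonoidAlgebra.liftNC_single]
    show MonoidAlgebra.single (1 : G) ((c : 𝕂)) * MonoidAlgebra.single g (1 : 𝕂) =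
      MonoidAlgebra.single g ((c : 𝕂))
    rw [MonoidAlgebra.single_mul_single, one_mul, mul_one]
  have hψeq : ∀ x : MonoidAlgebra ℤ G,
      (ψ x).coeff = Finsupp.mapRange (Int.cast : ℤ → 𝕂) Int.cast_zero x.coeff := by
    intro x
    induction x using MonoidAlgebra.induction_linear with
    | zero => simp [map_zero]
    | add p q hp hq => rw [map_add, MonoidAlgebra.coeff_add, MonoidAlgebra.coeff_add, Finsupp.mapRange_add (by push_cast; simp), hp, hq]
    | single g c => rw [hψsingle, MonoidAlgebra.coeff_single, MonoidAlgebra.coeff_single, Finsupp.mapRange_single]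
  have hψinj : Function.Injective ψ := by
    intro x y hxy
    have hxy' := congrArg MonoidAlgebra.coeff hxy
    rw [hψeq, hψeq] at hxy'
    exact MonoidAlgebra.coeff_injective (Finsupp.mapRange_injective _ _ Int.cast_injective hxy')
  have hψa : ψ (MonoidAlgebra.of ℤ G a) = MonoidAlgebra.of 𝕂 G a := by
    show ψ (MonoidAlgebra.single a 1) = MonoidAlgebra.single a 1
    rw [hψsingle]; norm_num
  have hψx : ψ xZ =
      (∑ i ∈ Finset.range (n - k), (MonoidAlgebra.of 𝕂 G a) ^ i) ^ j *
        (∑ i ∈ Finset.range k, (MonoidAlgebra.of 𝕂 G a) ^ i) ^ l *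
        (MonoidAlgebra.of 𝕂 G a - 1) ^ s := by
    simp only [hxZ, map_mul, map_pow, map_sum, map_sub, map_one, hψa]
  have hψhat : ψ hatZ = ∑ i ∈ Finset.range n, (MonoidAlgebra.of 𝕂 G a) ^ i := by
    rw [hhatZ, map_sum]
    simp only [map_pow, hψa]
  constructor
  · intro h0
    have : ψ xZ = ψ 0 := by rw [hψx, h0, map_zero]
    have hx0 : xZ = 0 := hψinj this
    rw [hx0, map_zero] at hφxne
    exact hφxne rfl
  · intro heq
    have : ψ xZ = ψ (β • hatZ) := by
      rw [hψx, heq, map_zsmul, hψhat]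
    have hx : xZ = β • hatZ := hψinj this
    have : φ xZ = 0 := by rw [hx, map_zsmul, hφhat, smul_zero]
    exact hφxne this
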